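/- For every ε > 0 there exists N such that for all n ≥ N, the 2-dimension of the divisibility poset on {1,…,n} is at most ((4/3)·e·π² + ε)·(log n)²/(log log n). -/

import Mathlib

set_option maxHeartbeats 1000000

/-- The 2-dimension of the divisibility poset on a set `S ⊆ ℕ`:
the least `d` such that there is an order embedding of `(S, ∣)` into the
powerset of `{1, …, d}` ordered by inclusion. -/
noncomputable def divDim2 (S : Set ℕ) : ℕ :=
  sInf {d : ℕ | ∃ f : ℕ → Finset (Fin d), ∀ a ∈ S, ∀ b ∈ S, (f a ⊆ f b ↔ a ∣ b)}

open Finset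
open scoped Classical

noncomputable section

namespace DivDimAux

variable (n : ℕ)

def L2 : ℕ := Nat.log 2 n
def T : ℕ := Nat.sqrt (L2 n) + 1
def k : ℕ := Nat.log (T n + 1) n
def m : ℕ := 9 * (k n + 1) * (L2 n + 1)
def K : ℕ := k n + 1

instance : NeZero (K n) := ⟨Nat.succ_ne_zero _⟩

def Qset (a : ℕ) : Finset (Fin (n+1)) :=
  univ.filter fun q => ∃ p i : ℕ, p.Prime ∧ T n < p ∧ 1 ≤ i ∧ i ≤ a.factorization p ∧ (q : ℕ) = p ^ i

def SmallIdx : Finset (ℕ × ℕ) :=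
  ((range (T n + 1)) ×ˢ (Finset.Icc 1 (L2 n))).filter
    fun c => c.1.Prime ∧ c.2 ≤ Nat.log c.1 n

abbrev Col := Fin (n+1) → Fin (K n)
abbrev Om := Fin (m n) → Col n

def Good (ω : Om n) : Prop :=
  ∀ b ∈ Finset.Icc 1 n, ∀ q₀ : Fin (n+1), q₀ ∉ Qset n b →
    ∃ x, ω x q₀ = 0 ∧ ∀ q ∈ Qset n b, ω x q ≠ 0

def smallSet (a : ℕ) : Finset (SmallIdx n) :=
  univ.filter fun c => (c : ℕ × ℕ).2 ≤ a.factorization (c : ℕ × ℕ).1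

def largeSet (ω : Om n) (a : ℕ) : Finset (Fin (m n)) :=
  univ.filter fun x => ∃ q ∈ Qset n a, ω x q = 0

def g (ω : Om n) (a : ℕ) : Finset (↥(SmallIdx n) ⊕ Fin (m n)) :=
  (smallSet n a).disjSum (largeSet n ω a)

lemma disjSum_subset_iff {α β : Type*} {s s' : Finset α} {t t' : Finset β} :
    s.disjSum t ⊆ s'.disjSum t' ↔ s ⊆ s' ∧ t ⊆ t' := by
  constructor
  · intro h
    constructor
    · intro x hx
      have := h (Finset.inl_mem_disjSum.2 hx)
      exact Finset.inl_mem_disjSum.1 this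
    · intro x hx
      have := h (Finset.inr_mem_disjSum.2 hx)
      exact Finset.inr_mem_disjSum.1 this
  · rintro ⟨h1, h2⟩ x hx
    rcases Finset.mem_disjSum.1 hx with ⟨a, ha, rfl⟩ | ⟨b, hb, rfl⟩
    · exact Finset.inl_mem_disjSum.2 (h1 ha)
    · exact Finset.inr_mem_disjSum.2 (h2 hb)

lemma mem_Qset {a : ℕ} {q : Fin (n+1)} :
    q ∈ Qset n a ↔ ∃ p i : ℕ, p.Prime ∧ T n < p ∧ 1 ≤ i ∧ i ≤ a.factorization p ∧ (q : ℕ) = p ^ i := by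
  simp [Qset]

lemma Qset_mono {a b : ℕ} (h : a.factorization ≤ b.factorization) :
    Qset n a ⊆ Qset n b := by
  intro q hq
  rcases (mem_Qset n).1 hq with ⟨p, i, hp, hT, h1, hle, hq⟩
  exact (mem_Qset n).2 ⟨p, i, hp, hT, h1, hle.trans (h p), hq⟩

lemma Qset_card_le {b : ℕ} (hb1 : 1 ≤ b) (hbn : b ≤ n) : (Qset n b).card ≤ k n := by
  classical
  have hb0 : b ≠ 0 := by omega
  set P : Finset ℕ := b.primeFactors.filter (fun p => T n < p) with hP
  set S : Finset ℕ := P.biUnion (fun p => (Finset.Icc 1 (b.factorization p)).image (fun i => p ^ i)) with hS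
  have himg : (Qset n b).image (fun q : Fin (n+1) => (q : ℕ)) ⊆ S := by
    intro x hx
    rw [Finset.mem_image] at hx
    obtain ⟨q, hq, rfl⟩ := hx
    rw [Qset, Finset.mem_filter] at hq
    obtain ⟨-, p, i, hp, hT, h1, hle, heq⟩ := hq
    rw [hS, Finset.mem_biUnion]
    refine ⟨p, ?_, Finset.mem_image.2 ⟨i, Finset.mem_Icc.2 ⟨h1, hle⟩, heq.symm⟩⟩
    rw [hP, Finset.mem_filter, Nat.mem_primeFactors]
    have hpd : p ∣ b := by
      have := (hp.pow_dvd_iff_le_factorization hb0).2 (le_trans h1 hle)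
      exact dvd_trans (dvd_pow_self p (by omega)) this
    exact ⟨⟨hp, hpd, hb0⟩, hT⟩
  have hcard1 : (Qset n b).card ≤ S.card := by
    have : (Qset n b).card = ((Qset n b).image (fun q : Fin (n+1) => (q : ℕ))).card := by
      rw [Finset.card_image_of_injective _ Fin.val_injective]
    rw [this]
    exact Finset.card_le_card himg
  have hcard2 : S.card ≤ ∑ p ∈ P, b.factorization p := by
    refine (Finset.card_biUnion_le).trans ?_
    refine Finset.sum_le_sum fun p hp => ?_
    exact (Finset.card_image_le).trans (by rw [Nat.card_Icc]; omega)
  have hpow : (T n + 1) ^ (∑ p ∈ P, b.factorization p) ≤ b := by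
    have h1 : (T n + 1) ^ (∑ p ∈ P, b.factorization p) = ∏ p ∈ P, (T n + 1) ^ b.factorization p := by
      rw [Finset.prod_pow_eq_pow_sum]
    have h2 : ∏ p ∈ P, (T n + 1) ^ b.factorization p ≤ ∏ p ∈ P, p ^ b.factorization p := by
      refine Finset.prod_le_prod (fun _ _ => Nat.zero_le _) (fun p hp => ?_)
      rw [hP, Finset.mem_filter] at hp
      exact Nat.pow_le_pow_left (by omega) _
    have h3 : (∏ p ∈ P, p ^ b.factorization p) ∣ b := by
      have hsub : P ⊆ b.primeFactors := Finset.filter_subset _ _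
      have hfull : ∏ p ∈ b.primeFactors, p ^ b.factorization p = b := by
        rw [← Nat.support_factorization]
        exact Nat.factorization_prod_pow_eq_self hb0
      calc (∏ p ∈ P, p ^ b.factorization p) ∣ ∏ p ∈ b.primeFactors, p ^ b.factorization p :=
            Finset.prod_dvd_prod_of_subset _ _ _ hsub
        _ = b := hfull
    exact h1 ▸ (h2.trans (Nat.le_of_dvd (by omega) h3))
  have hsum : (∑ p ∈ P, b.factorization p) ≤ k n := by
    rw [k]
    refine (Nat.le_log_iff_pow_le (by simp [T]) (by omega)).2 ?_
    exact hpow.trans hbn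
  omega

lemma g_subset_iff (ω : Om n) (hg : Good n ω) {a b : ℕ}
    (ha : a ∈ Finset.Icc 1 n) (hb : b ∈ Finset.Icc 1 n) :
    (g n ω a ⊆ g n ω b ↔ a ∣ b) := by
  rw [Finset.mem_Icc] at ha hb
  have ha0 : a ≠ 0 := by omega
  have hb0 : b ≠ 0 := by omega
  rw [g, g, disjSum_subset_iff]
  constructor
  · rintro ⟨hs, hl⟩
    rw [← Nat.factorization_le_iff_dvd ha0 hb0]
    intro p
    by_cases hp : p.Prime
    swap
    · simp [Nat.factorization_eq_zero_of_not_prime _ hp]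
    by_cases hpT : p ≤ T n
    · -- small prime case
      set j := a.factorization p with hj
      rcases Nat.eq_zero_or_pos j with hj0 | hj1
      · omega
      have hpj : p ^ j ≤ n := by
        have : p ^ j ∣ a := (hp.pow_dvd_iff_le_factorization ha0).2 le_rfl
        exact (Nat.le_of_dvd (by omega) this).trans ha.2
      have hjlog : j ≤ Nat.log p n :=
        (Nat.le_log_iff_pow_le hp.one_lt (by omega)).2 hpj
      have hmem : (p, j) ∈ SmallIdx n := by
        rw [SmallIdx, Finset.mem_filter, Finset.mem_product]
        refine ⟨⟨Finset.mem_range.2 (by omega), Finset.mem_Icc.2 ⟨hj1, ?_⟩⟩, hp, hjlog⟩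
        exact hjlog.trans (Nat.log_anti_left one_lt_two hp.two_le)
      have h1 : (⟨(p, j), hmem⟩ : SmallIdx n) ∈ smallSet n a := by
        simp [smallSet]; exact hj.le
      have h2 := hs h1
      simpa [smallSet] using h2
    · -- large prime case
      push_neg at hpT
      by_contra hcon
      push_neg at hcon
      set j' := b.factorization p with hj'
      have hq0n : p ^ (j' + 1) ≤ n := by
        have h1 : p ^ (j' + 1) ≤ p ^ (a.factorization p) :=
          Nat.pow_le_pow_right hp.pos (by omega)
        have h2 : p ^ (a.factorization p) ∣ a := Nat.ordProj_dvd a p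
        exact (h1.trans (Nat.le_of_dvd (by omega) h2)).trans ha.2
      set q₀ : Fin (n+1) := ⟨p ^ (j' + 1), by omega⟩ with hq₀def
      have hq₀notin : q₀ ∉ Qset n b := by
        intro hmem
        rcases (mem_Qset n).1 hmem with ⟨r, i, hr, hTr, hi1, hile, heq⟩
        have hval : p ^ (j' + 1) = r ^ i := heq
        have hrp : r = p := by
          have h1 : r ∣ p ^ (j' + 1) := by
            rw [hval]; exact dvd_pow_self r (by omega)
          have h2 : r ∣ p := hr.dvd_of_dvd_pow h1
          exact (Nat.prime_dvd_prime_iff_eq hr hp).1 h2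
        subst hrp
        have : j' + 1 = i := Nat.pow_right_injective hr.two_le hval
        omega
      obtain ⟨x, hx0, hxne⟩ := hg b (Finset.mem_Icc.2 hb) q₀ hq₀notin
      have hxa : x ∈ largeSet n ω a := by
        rw [largeSet, Finset.mem_filter]
        refine ⟨Finset.mem_univ _, q₀, ?_, hx0⟩
        exact (mem_Qset n).2 ⟨p, j' + 1, hp, hpT, by omega, by omega, rfl⟩
      have hxb := hl hxa
      rw [largeSet, Finset.mem_filter] at hxb
      obtain ⟨-, q, hq, hq0⟩ := hxb
      exact hxne q hq hq0
  · intro hdvd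
    have hf : a.factorization ≤ b.factorization :=
      (Nat.factorization_le_iff_dvd ha0 hb0).2 hdvd
    constructor
    · intro c hc
      rw [smallSet, Finset.mem_filter] at hc ⊢
      exact ⟨hc.1, hc.2.trans (hf _)⟩
    · intro x hx
      rw [largeSet, Finset.mem_filter] at hx ⊢
      obtain ⟨-, q, hq, hq0⟩ := hx
      exact ⟨Finset.mem_univ _, q, Qset_mono n hf hq, hq0⟩

def colBad (b : ℕ) (q₀ : Fin (n+1)) : Finset (Col n) :=
  univ.filter fun gc => ¬(gc q₀ = 0 ∧ ∀ q ∈ Qset n b, gc q ≠ 0)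

lemma colBad_card {b : ℕ} {q₀ : Fin (n+1)} (hq₀ : q₀ ∉ Qset n b) :
    (colBad n b q₀).card
      = K n ^ (n+1) - (K n - 1) ^ (Qset n b).card * K n ^ (n - (Qset n b).card) := by
  classical
  set t := (Qset n b).card with ht
  set S : Fin (n+1) → Finset (Fin (K n)) :=
    fun v => if v = q₀ then {0} else if v ∈ Qset n b then ({0}ᶜ) else univ with hSdef
  have hgood : (univ.filter fun gc : Col n => gc q₀ = 0 ∧ ∀ q ∈ Qset n b, gc q ≠ 0)
      = Fintype.piFinset S := by
    ext gc
    simp only [Finset.mem_filter, Finset.mem_univ, true_and, Fintype.mem_piFinset]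
    constructor
    · rintro ⟨h0, hne⟩ v
      rw [hSdef]
      by_cases hv : v = q₀
      · subst hv; simp [h0]
      · by_cases hvQ : v ∈ Qset n b
        · simp [hv, hvQ, hne v hvQ]
        · simp [hv, hvQ]
    · intro h
      constructor
      · have := h q₀; simpa [hSdef] using this
      · intro q hq
        have hqne : q ≠ q₀ := fun he => hq₀ (he ▸ hq)
        have := h q
        simpa [hSdef, hqne, hq] using this
  have hgoodcard : (univ.filter fun gc : Col n => gc q₀ = 0 ∧ ∀ q ∈ Qset n b, gc q ≠ 0).card
      = (K n - 1) ^ t * K n ^ (n - t) := by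
    rw [hgood, Fintype.card_piFinset]
    have h1 : ∏ v, (S v).card = (S q₀).card * ∏ v ∈ univ.erase q₀, (S v).card :=
      (Finset.mul_prod_erase univ _ (mem_univ q₀)).symm
    have h2 : (S q₀).card = 1 := by simp [hSdef]
    have h3 : ∏ v ∈ univ.erase q₀, (S v).card
        = ∏ v ∈ univ.erase q₀, (if v ∈ Qset n b then K n - 1 else K n) := by
      refine Finset.prod_congr rfl fun v hv => ?_
      have hvne : v ≠ q₀ := (Finset.mem_erase.1 hv).1
      by_cases hvQ : v ∈ Qset n b
      · simp [hSdef, hvne, hvQ, Finset.card_compl]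
      · simp [hSdef, hvne, hvQ]
    have h4 : ∏ v ∈ univ.erase q₀, (if v ∈ Qset n b then K n - 1 else K n)
        = (K n - 1) ^ t * K n ^ (n - t) := by
      rw [Finset.prod_ite]
      have hfeq : Finset.filter (fun v => v ∈ Qset n b) (univ.erase q₀) = Qset n b := by
        ext v
        simp only [Finset.mem_filter, Finset.mem_erase, Finset.mem_univ, true_and, and_true]
        constructor
        · rintro ⟨-, h⟩; exact h
        · intro h; exact ⟨fun he => hq₀ (he ▸ h), h⟩
      have hcard_erase : (univ.erase q₀).card = n := by
        rw [Finset.card_erase_of_mem (mem_univ _)]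
        simp
      have hc1 : (Finset.filter (fun v => v ∈ Qset n b) (univ.erase q₀)).card = t := by
        rw [hfeq]
      have hc2 : (Finset.filter (fun v => ¬(v ∈ Qset n b)) (univ.erase q₀)).card = n - t := by
        have := Finset.card_filter_add_card_filter_not
          (s := univ.erase q₀) (p := fun v => v ∈ Qset n b)
        omega
      rw [Finset.prod_const, Finset.prod_const, hc1, hc2]
    rw [h1, h2, h3, h4, one_mul]
  have htot := Finset.card_filter_add_card_filter_not
    (s := (univ : Finset (Col n))) (p := fun gc : Col n => gc q₀ = 0 ∧ ∀ q ∈ Qset n b, gc q ≠ 0)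
  have hcardcol : (univ : Finset (Col n)).card = K n ^ (n + 1) := by
    rw [Finset.card_univ, Fintype.card_fun]
    simp
  rw [hcardcol] at htot
  have h5 : (univ.filter fun gc : Col n => (gc q₀ = 0 ∧ ∀ q ∈ Qset n b, gc q ≠ 0)).card
      + (colBad n b q₀).card = K n ^ (n+1) := htot
  clear hgood htot
  clear_value S
  clear hSdef S
  rw [← hgoodcard]
  exact eq_tsub_of_add_eq ((add_comm _ _).trans h5)

def badPair (b : ℕ) (q₀ : Fin (n+1)) : Finset (Om n) :=
  univ.filter fun ω => ∀ x, ω x ∈ colBad n b q₀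

lemma badPair_card (b : ℕ) (q₀ : Fin (n+1)) :
    (badPair n b q₀).card = (colBad n b q₀).card ^ (m n) := by
  have h : badPair n b q₀ = Fintype.piFinset (fun _ : Fin (m n) => colBad n b q₀) := by
    ext ω
    simp [badPair, Fintype.mem_piFinset]
  rw [h, Fintype.card_piFinset]
  simp

lemma exists_good
    (hkn : k n ≤ n)
    (hnum : n * (n+1) * (K n ^ (n+1) - (K n - 1) ^ (k n) * K n ^ (n - k n)) ^ (m n)
      < (K n ^ (n+1)) ^ (m n)) :
    ∃ ω : Om n, Good n ω := by
  classical
  set Bad : Finset (Om n) := univ.filter fun ω => ¬ Good n ω with hBad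
  set idx : Finset (ℕ × Fin (n+1)) :=
    (Finset.Icc 1 n ×ˢ (univ : Finset (Fin (n+1)))).filter fun bq => bq.2 ∉ Qset n bq.1 with hidx
  have hsub : Bad ⊆ idx.biUnion fun bq => badPair n bq.1 bq.2 := by
    intro ω hω
    rw [hBad, Finset.mem_filter] at hω
    obtain ⟨-, hng⟩ := hω
    rw [Good] at hng
    push_neg at hng
    obtain ⟨b, hb, q₀, hq₀, hfail⟩ := hng
    rw [Finset.mem_biUnion]
    refine ⟨(b, q₀), ?_, ?_⟩
    · rw [hidx, Finset.mem_filter, Finset.mem_product]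
      exact ⟨⟨hb, mem_univ _⟩, hq₀⟩
    · rw [badPair, Finset.mem_filter]
      refine ⟨mem_univ _, fun x => ?_⟩
      rw [colBad, Finset.mem_filter]
      refine ⟨mem_univ _, ?_⟩
      rintro ⟨h0, hne⟩
      obtain ⟨q, hq, hq0⟩ := hfail x h0
      exact hne q hq hq0
  have hcardBad : Bad.card ≤ n * (n+1) *
      (K n ^ (n+1) - (K n - 1) ^ (k n) * K n ^ (n - k n)) ^ (m n) := by
    refine (Finset.card_le_card hsub).trans ((Finset.card_biUnion_le).trans ?_)
    have hone : ∀ bq ∈ idx, (badPair n bq.1 bq.2).card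
        ≤ (K n ^ (n+1) - (K n - 1) ^ (k n) * K n ^ (n - k n)) ^ (m n) := by
      rintro ⟨b, q₀⟩ hbq
      rw [hidx, Finset.mem_filter, Finset.mem_product] at hbq
      obtain ⟨⟨hb, -⟩, hq₀⟩ := hbq
      rw [Finset.mem_Icc] at hb
      rw [badPair_card, colBad_card n hq₀]
      refine Nat.pow_le_pow_left ?_ _
      have ht := Qset_card_le n hb.1 hb.2
      set t := (Qset n b).card with htdef
      have hmono : (K n - 1) ^ (k n) * K n ^ (n - k n) ≤ (K n - 1) ^ t * K n ^ (n - t) := by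
        have h1 : (K n - 1) ^ (k n) = (K n - 1) ^ t * (K n - 1) ^ (k n - t) := by
          rw [← pow_add]; congr 1; omega
        have h2 : (K n - 1) ^ (k n - t) ≤ K n ^ (k n - t) :=
          Nat.pow_le_pow_left (by omega) _
        calc (K n - 1) ^ (k n) * K n ^ (n - k n)
            = (K n - 1) ^ t * ((K n - 1) ^ (k n - t) * K n ^ (n - k n)) := by rw [h1]; ring
          _ ≤ (K n - 1) ^ t * (K n ^ (k n - t) * K n ^ (n - k n)) := by
              exact Nat.mul_le_mul_left _ (Nat.mul_le_mul_right _ h2)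
          _ = (K n - 1) ^ t * K n ^ (n - t) := by rw [← pow_add]; congr 2; omega
      omega
    refine (Finset.sum_le_sum hone).trans ?_
    rw [Finset.sum_const, smul_eq_mul]
    have hidxcard : idx.card ≤ n * (n + 1) := by
      refine (Finset.card_filter_le _ _).trans ?_
      rw [Finset.card_product, Nat.card_Icc]
      simp [Nat.mul_comm]
    exact Nat.mul_le_mul_right _ hidxcard
  have hcardtot : (univ : Finset (Om n)).card = (K n ^ (n+1)) ^ (m n) := by
    rw [Finset.card_univ, Fintype.card_fun, Fintype.card_fun]
    simp
  have hlt : Bad.card < (univ : Finset (Om n)).card := by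
    rw [hcardtot]; exact lt_of_le_of_lt hcardBad hnum
  rw [Finset.card_univ] at hlt
  have hcompl : 0 < Badᶜ.card := by
    rw [Finset.card_compl]
    omega
  obtain ⟨ω, hω⟩ := Finset.card_pos.1 hcompl
  rw [Finset.mem_compl, hBad, Finset.mem_filter] at hω
  push_neg at hω
  exact ⟨ω, hω (mem_univ _)⟩

lemma counting_numeric (hn : 1 ≤ n) (hk1 : 1 ≤ k n) (hkn : k n ≤ n) :
    n * (n+1) * (K n ^ (n+1) - (K n - 1) ^ (k n) * K n ^ (n - k n)) ^ (m n)
      < (K n ^ (n+1)) ^ (m n) := by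
  have hK2 : 2 ≤ K n := by rw [K]; omega
  have hDA : (K n - 1) ^ (k n) * K n ^ (n - k n) ≤ K n ^ (n+1) := by
    calc (K n - 1) ^ (k n) * K n ^ (n - k n) ≤ K n ^ (k n) * K n ^ (n - k n) :=
          Nat.mul_le_mul_right _ (Nat.pow_le_pow_left (by omega) _)
      _ = K n ^ (k n + (n - k n)) := by rw [pow_add]
      _ ≤ K n ^ (n+1) := Nat.pow_le_pow_right (by omega) (by omega)
  rw [← Nat.cast_lt (α := ℝ)]
  push_cast [Nat.cast_sub hDA]
  set Kr : ℝ := (K n : ℝ) with hKr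
  have hKr2 : (2:ℝ) ≤ Kr := by rw [hKr]; exact_mod_cast hK2
  have hKrpos : 0 < Kr := by linarith
  have hcastKm1 : ((K n - 1 : ℕ) : ℝ) = Kr - 1 := by
    push_cast [Nat.cast_sub (by omega : 1 ≤ K n)]; rfl
  rw [hcastKm1]
  set A : ℝ := Kr ^ (n+1) with hA
  set D : ℝ := (Kr - 1) ^ (k n) * Kr ^ (n - k n) with hD
  have hApos : 0 < A := pow_pos hKrpos _
  have hDpos : 0 < D := by
    apply mul_pos (pow_pos (by linarith) _) (pow_pos hKrpos _)
  have hDAr : D ≤ A := by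
    calc D = (((K n - 1) ^ (k n) * K n ^ (n - k n) : ℕ) : ℝ) := by
            push_cast [hcastKm1]; ring
      _ ≤ ((K n ^ (n+1) : ℕ) : ℝ) := by exact_mod_cast hDA
      _ = A := by push_cast; ring
  set c : ℝ := D / A with hc
  have hc1 : c ≤ 1 := by rw [hc, div_le_one hApos]; exact hDAr
  have hcpos : 0 < c := div_pos hDpos hApos
  have hpows : Kr ^ (n - k n) * (Kr ^ (k n) * Kr) = Kr ^ (n+1) := by
    rw [← mul_assoc, ← pow_add, ← pow_succ]
    congr 1
    omega
  have hcval : c = ((Kr - 1)/Kr) ^ (k n) / Kr := by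
    rw [hc, hD, hA, div_pow, div_div, div_eq_div_iff (by positivity) (by positivity)]
    calc (Kr - 1) ^ (k n) * Kr ^ (n - k n) * (Kr ^ (k n) * Kr)
        = (Kr - 1) ^ (k n) * (Kr ^ (n - k n) * (Kr ^ (k n) * Kr)) := by ring
      _ = (Kr - 1) ^ (k n) * Kr ^ (n+1) := by rw [hpows]
  have hkkpos : (0:ℝ) < (k n : ℝ) := by exact_mod_cast hk1
  have hKrk : Kr - 1 = (k n : ℝ) := by rw [hKr, K]; push_cast; ring
  have hexp : Real.exp (-1) ≤ ((Kr - 1)/Kr) ^ (k n) := by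
    have h1 : (1 + 1/(k n : ℝ)) ≤ Real.exp (1/(k n : ℝ)) := by
      have := Real.add_one_le_exp (1/(k n : ℝ)); linarith
    have h2 : (1 + 1/(k n : ℝ)) ^ (k n) ≤ Real.exp 1 := by
      calc (1 + 1/(k n : ℝ)) ^ (k n) ≤ (Real.exp (1/(k n : ℝ))) ^ (k n) := by
            apply pow_le_pow_left₀ (by positivity) h1
        _ = Real.exp ((k n) * (1/(k n : ℝ))) := by rw [← Real.exp_nat_mul]
        _ = Real.exp 1 := by rw [mul_one_div, div_self (by linarith)]
    have hfrac : (Kr - 1)/Kr = (1 + 1/(k n : ℝ))⁻¹ := by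
      rw [hKrk, hKr, K]
      push_cast
      rw [inv_eq_one_div]
      rw [div_eq_div_iff (by positivity) (by positivity)]
      field_simp
    rw [hfrac, inv_pow, Real.exp_neg]
    exact inv_anti₀ (by positivity) h2
  have hclow : Real.exp (-1) / Kr ≤ c := by
    rw [hcval]
    gcongr
  clear_value Kr A D c
  have hmcast : (m n : ℝ) = 9 * Kr * ((L2 n : ℝ) + 1) := by
    rw [m, hKr, K]; push_cast; ring
  have hS1 : (1:ℝ) ≤ (L2 n : ℝ) + 1 := by
    have : (0:ℝ) ≤ (L2 n : ℝ) := Nat.cast_nonneg _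
    linarith
  have hlogn : Real.log n < ((L2 n : ℝ) + 1) * Real.log 2 := by
    have h0 : n < 2 ^ (L2 n + 1) := by
      rw [L2]; exact Nat.lt_pow_succ_log_self one_lt_two n
    have h1 : (n:ℝ) < (2:ℝ) ^ (L2 n + 1) := by exact_mod_cast h0
    have h2 := Real.log_lt_log (by exact_mod_cast hn) h1
    rwa [Real.log_pow, Nat.cast_add, Nat.cast_one] at h2
  have hexpm1 : (0.36 : ℝ) ≤ Real.exp (-1) := by
    rw [Real.exp_neg]
    rw [inv_eq_one_div, le_div_iff₀ (Real.exp_pos 1)]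
    nlinarith [Real.exp_one_lt_d9]
  have hlog2 : Real.log 2 < 0.6931471808 := Real.log_two_lt_d9
  have hlog2pos : 0 < Real.log 2 := Real.log_pos (by norm_num)
  have hcm : 2 * Real.log n + 1 ≤ c * (m n) := by
    have step1 : 2 * Real.log n + 1 ≤ 9 * Real.exp (-1) * ((L2 n : ℝ) + 1) := by
      nlinarith [hlogn, hexpm1, hlog2, hS1, Real.log_nonneg (by exact_mod_cast hn : (1:ℝ) ≤ n)]
    have step2 : 9 * Real.exp (-1) * ((L2 n : ℝ) + 1) = (Real.exp (-1) / Kr) * (m n) := by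
      rw [hmcast]
      field_simp
    have step3 : (Real.exp (-1) / Kr) * (m n) ≤ c * (m n) := by
      apply mul_le_mul_of_nonneg_right hclow (by positivity)
    linarith
  have hAc : A * c = D := by rw [hc, mul_comm, div_mul_cancel₀ _ (ne_of_gt hApos)]
  have hAD : A - D = A * (1 - c) := by rw [mul_sub, mul_one, hAc]
  rw [hAD, mul_pow]
  have h1c : (1 - c) ^ (m n) ≤ Real.exp (-(2 * Real.log n + 1)) := by
    calc (1 - c) ^ (m n) ≤ (Real.exp (-c)) ^ (m n) := by
          apply pow_le_pow_left₀ (by linarith) (by nlinarith [Real.add_one_le_exp (-c)])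
      _ = Real.exp ((m n : ℝ) * (-c)) := (Real.exp_nat_mul (-c) (m n)).symm
      _ ≤ Real.exp (-(2 * Real.log n + 1)) := by
          apply Real.exp_le_exp.2
          have heq : (m n : ℝ) * (-c) = -(c * (m n : ℝ)) := by ring
          rw [heq]
          linarith only [hcm]
  clear hDA hpows hcval hexp hAc hAD hDAr hc hD hA hclow hcm hmcast hKrk hcastKm1 hlogn hKr2 hKrpos hKr hDpos D Kr
  have hA2 : Real.exp (2 * Real.log n + 1) = (n:ℝ)^2 * Real.exp 1 := by
    rw [show (2:ℝ) * Real.log n + 1 = Real.log ((n:ℝ)^2) + 1 by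
      rw [Real.log_pow]; push_cast; ring]
    rw [Real.exp_add, Real.exp_log (by positivity)]
  have hexpval : Real.exp (-(2 * Real.log n + 1)) = 1 / ((n:ℝ)^2 * Real.exp 1) := by
    rw [Real.exp_neg, hA2, one_div]
  have habs : ∀ N A' X : ℝ, 1 ≤ N → 0 < A' → 0 ≤ X → X ≤ 1/(N^2*Real.exp 1) →
      N*(N+1)*(A'*X) < A' := by
    intro N A' X h1 hA' hX hXle
    have h2 : N*(N+1)*X < 1 := by
      have hstep : N*(N+1)*X ≤ N*(N+1)*(1/(N^2*Real.exp 1)) := by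
        apply mul_le_mul_of_nonneg_left hXle
        nlinarith
      have hlt : N*(N+1)*(1/(N^2*Real.exp 1)) < 1 := by
        rw [mul_one_div, div_lt_one (by positivity)]
        nlinarith [Real.exp_one_gt_d9]
      linarith
    calc N*(N+1)*(A'*X) = (N*(N+1)*X)*A' := by ring
      _ < 1*A' := mul_lt_mul_of_pos_right h2 hA'
      _ = A' := one_mul _
  have h1n : (1:ℝ) ≤ (n:ℝ) := by exact_mod_cast hn
  have hXle : (1 - c) ^ (m n) ≤ 1/((n:ℝ)^2*Real.exp 1) := hexpval ▸ h1c
  exact habs (n:ℝ) (A ^ (m n)) ((1 - c) ^ (m n)) h1n (pow_pos hApos _)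
    (pow_nonneg (by linarith only [hc1]) _) hXle

lemma pure1 {u : ℝ} (hu : 31 ≤ u) :
    (1.3*u^2) * (1.4641*((u^2)^2)) * (4*u) ≤ (u^2)^2*(u^2)^2 := by
  have hu0 : (0:ℝ) ≤ u := by linarith
  have h7 : (0:ℝ) ≤ u^7 := pow_nonneg hu0 7
  nlinarith [mul_nonneg h7 (by linarith : (0:ℝ) ≤ u - 8), h7]

lemma pure2 {u : ℝ} (hu : 31 ≤ u) :
    9*((2*(u^2)^2 + 4*u) * (1.4641*((u^2)^2)+1)) ≤ 29*((u^2)^2*(u^2)^2) := by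
  have hu0 : (0:ℝ) ≤ u := by linarith
  have hu1 : (1:ℝ) ≤ u := by linarith
  have h3 : (29791:ℝ) ≤ u^3 := by nlinarith [sq_nonneg (u-31), mul_nonneg hu0 hu0]
  have h5 : (0:ℝ) ≤ u^5 := pow_nonneg hu0 5
  have h45 : u^4 ≤ u^5 := pow_le_pow_right₀ hu1 (by norm_num)
  have h15 : u^1 ≤ u^5 := pow_le_pow_right₀ hu1 (by norm_num)
  have hbig : (29791:ℝ) * u^5 ≤ u^8 := by
    nlinarith [mul_nonneg h5 (by linarith : (0:ℝ) ≤ u^3 - 29791)]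
  nlinarith [hbig, h45, h15, h5]

lemma smallIdx_card_le : (SmallIdx n).card ≤ (T n + 1) * L2 n := by
  refine (Finset.card_filter_le _ _).trans ?_
  rw [Finset.card_product, Finset.card_range, Nat.card_Icc, Nat.add_sub_cancel]

lemma analytic_facts (hL : (10^6:ℝ) ≤ Real.log n) :
    2 ≤ n ∧ T n + 1 ≤ n ∧ 1 ≤ k n ∧ k n ≤ n ∧
    (((SmallIdx n).card : ℝ) + (m n : ℝ)) * Real.log (Real.log n)
       ≤ 30 * (Real.log n)^2 := by
  set L := Real.log n with hLdef
  have hLpos : (0:ℝ) < L := by norm_num at hL ⊢; linarith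
  have hn0 : n ≠ 0 := by
    rintro rfl
    rw [hLdef] at hL
    simp [Real.log_zero] at hL
    norm_num at hL
  have hn1 : 1 ≤ n := by omega
  have hnR : (1:ℝ) ≤ (n:ℝ) := by exact_mod_cast hn1
  have hnbig : (10^6:ℝ) ≤ (n:ℝ) := by
    have := Real.log_le_sub_one_of_pos (by linarith : (0:ℝ) < (n:ℝ))
    rw [← hLdef] at this
    linarith
  have hn2 : 2 ≤ n := by
    by_contra h
    push_neg at h
    interval_cases n <;> norm_num at hnbig
  have hlog2lo : (0.6931471803:ℝ) < Real.log 2 := Real.log_two_gt_d9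
  have hlog2hi : Real.log 2 < 0.6931471808 := Real.log_two_lt_d9
  have hL2up : (L2 n : ℝ) * Real.log 2 ≤ L := by
    have h0 : (2:ℕ) ^ (L2 n) ≤ n := by
      rw [L2]; exact Nat.pow_log_le_self 2 hn0
    have h1 : ((2:ℝ)) ^ (L2 n) ≤ (n:ℝ) := by exact_mod_cast h0
    have h2 := Real.log_le_log (by positivity) h1
    rwa [Real.log_pow] at h2
  have hL2low : L ≤ ((L2 n : ℝ) + 1) * Real.log 2 := by
    have h0 : n < 2 ^ (L2 n + 1) := by
      rw [L2]; exact Nat.lt_pow_succ_log_self one_lt_two n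
    have h1 : (n:ℝ) < (2:ℝ) ^ (L2 n + 1) := by exact_mod_cast h0
    have h2 := Real.log_le_log (by positivity) h1.le
    rw [Real.log_pow] at h2
    push_cast at h2
    linarith
  have hL2nn : (0:ℝ) ≤ (L2 n : ℝ) := Nat.cast_nonneg _
  have hL2geL : L ≤ (L2 n : ℝ) := by nlinarith
  have hL2le : (L2 n : ℝ) ≤ 1.4641 * L := by nlinarith
  set s := Real.sqrt L with hs
  set u := Real.sqrt s with hu
  have hsnn : 0 ≤ s := Real.sqrt_nonneg _
  have hunn : 0 ≤ u := Real.sqrt_nonneg _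
  have hs2 : s^2 = L := Real.sq_sqrt hLpos.le
  have hu2 : u^2 = s := Real.sq_sqrt hsnn
  have hu4 : (u^2)^2 = L := by rw [hu2]; exact hs2
  have hs1000 : (1000:ℝ) ≤ s := by
    rw [hs]
    rw [show (1000:ℝ) = Real.sqrt (1000^2) by rw [Real.sqrt_sq]; norm_num]
    exact Real.sqrt_le_sqrt (by norm_num; linarith)
  have hu31 : (31:ℝ) ≤ u := by nlinarith
  have hLL4u : Real.log L ≤ 4 * u := by
    have h1 : Real.log L = 2 * Real.log s := by
      rw [hs, Real.log_sqrt hLpos.le]; ring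
    have h2 : Real.log s = 2 * Real.log u := by
      rw [hu, Real.log_sqrt hsnn]; ring
    have h3 := Real.log_le_sub_one_of_pos (by nlinarith : (0:ℝ) < u)
    rw [h1, h2]
    linarith
  set LL := Real.log L with hLL
  have hLLpos : 0 < LL := Real.log_pos (by norm_num at hL ⊢; linarith)
  have hTlowsq : L < (T n : ℝ) * (T n : ℝ) := by
    have h0 : L2 n < (Nat.sqrt (L2 n) + 1) * (Nat.sqrt (L2 n) + 1) := Nat.lt_succ_sqrt _
    have h1 : (L2 n : ℝ) < ((T n : ℝ)) * ((T n : ℝ)) := by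
      rw [T]; exact_mod_cast h0
    linarith
  have hTnn : (0:ℝ) ≤ (T n : ℝ) := Nat.cast_nonneg _
  have hTlow : s ≤ (T n : ℝ) := by
    rw [hs]
    have := Real.sqrt_le_sqrt (le_of_lt hTlowsq)
    calc Real.sqrt L ≤ Real.sqrt ((T n : ℝ) * (T n : ℝ)) := this
      _ = (T n : ℝ) := Real.sqrt_mul_self hTnn
  have hTup : (T n : ℝ) + 1 ≤ 1.3 * u^2 := by
    have h0 : ((Nat.sqrt (L2 n) : ℝ)) ^ 2 ≤ (L2 n : ℝ) := by
      exact_mod_cast Nat.sqrt_le' (L2 n)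
    have h1 : ((Nat.sqrt (L2 n) : ℝ)) ≤ 1.21 * u^2 := by
      nlinarith [Nat.cast_nonneg (α := ℝ) (Nat.sqrt (L2 n)), hu2, hs2]
    have h2 : (T n : ℝ) = (Nat.sqrt (L2 n) : ℝ) + 1 := by
      rw [T]; push_cast; ring
    nlinarith
  have hsn : Real.sqrt (n:ℝ) * Real.sqrt (n:ℝ) = (n:ℝ) := Real.mul_self_sqrt (by linarith)
  have hsqn1000 : (1000:ℝ) ≤ Real.sqrt (n:ℝ) := by
    rw [show (1000:ℝ) = Real.sqrt (1000^2) by rw [Real.sqrt_sq]; norm_num]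
    exact Real.sqrt_le_sqrt (le_trans (by norm_num) hnbig)
  have hLle2sqn : L ≤ 2 * Real.sqrt (n:ℝ) := by
    have h1 : Real.log (Real.sqrt (n:ℝ)) = L / 2 := by
      rw [Real.log_sqrt (by linarith)]
    have h2 := Real.log_le_sub_one_of_pos (by linarith : (0:ℝ) < Real.sqrt (n:ℝ))
    rw [h1] at h2
    linarith
  have hTn_real : (T n : ℝ) + 1 ≤ (n:ℝ) := by
    have h1 : (1.3:ℝ) * u^2 = 1.3 * s := by rw [hu2]
    nlinarith
  have hTn : T n + 1 ≤ n := by exact_mod_cast hTn_real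
  have hk1 : 1 ≤ k n := by
    rw [k]
    refine Nat.log_pos ?_ hTn
    rw [T]
    omega
  have hkn : k n ≤ n := by
    have h1 : k n < 2 ^ (k n) := Nat.lt_two_pow_self
    have h2 : (2:ℕ) ^ (k n) ≤ (T n + 1) ^ (k n) :=
      Nat.pow_le_pow_left (by rw [T]; omega) _
    have h3 : (T n + 1) ^ (k n) ≤ n := by
      rw [k]; exact Nat.pow_log_le_self _ hn0
    exact (lt_of_lt_of_le h1 (h2.trans h3)).le
  have hkLL : (k n : ℝ) * LL ≤ 2 * L := by
    have h1 : (T n + 1 : ℕ) ^ (k n) ≤ n := by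
      rw [k]; exact Nat.pow_log_le_self _ hn0
    have h2 : ((T n : ℝ) + 1) ^ (k n) ≤ (n:ℝ) := by exact_mod_cast h1
    have h3 := Real.log_le_log (by positivity) h2
    rw [Real.log_pow] at h3
    have h4 : LL / 2 ≤ Real.log ((T n : ℝ) + 1) := by
      have h5 : s ≤ (T n : ℝ) + 1 := by linarith
      have h6 := Real.log_le_log (by linarith : (0:ℝ) < s) h5
      have h7 : Real.log s = LL / 2 := by
        rw [hs, Real.log_sqrt hLpos.le, hLL]
      linarith [h6, h7.symm.le, h7.le]
    have hknn : (0:ℝ) ≤ (k n : ℝ) := Nat.cast_nonneg _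
    nlinarith
  refine ⟨hn2, hTn, hk1, hkn, ?_⟩
  have hScast : ((SmallIdx n).card : ℝ) ≤ ((T n : ℝ) + 1) * (L2 n : ℝ) := by
    exact_mod_cast smallIdx_card_le n
  have hSnn : (0:ℝ) ≤ ((SmallIdx n).card : ℝ) := Nat.cast_nonneg _
  have hq1 : ((SmallIdx n).card : ℝ) * LL ≤ (u^2)^2 * (u^2)^2 := by
    have hS2 : ((SmallIdx n).card : ℝ) ≤ (1.3 * u^2) * (1.4641 * ((u^2)^2)) := by
      calc ((SmallIdx n).card : ℝ) ≤ ((T n : ℝ) + 1) * (L2 n : ℝ) := hScast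
        _ ≤ (1.3 * u^2) * (1.4641 * ((u^2)^2)) := by
            rw [hu4]; exact mul_le_mul hTup (by linarith) hL2nn (by positivity)
    calc ((SmallIdx n).card : ℝ) * LL ≤ ((1.3 * u^2) * (1.4641 * ((u^2)^2))) * (4*u) := by
          exact mul_le_mul hS2 hLL4u hLLpos.le (by positivity)
      _ ≤ (u^2)^2 * (u^2)^2 := pure1 hu31
  have hmcast : (m n : ℝ) = 9 * ((k n : ℝ) + 1) * ((L2 n : ℝ) + 1) := by
    rw [m]; push_cast; ring
  have hq2 : (m n : ℝ) * LL ≤ 29 * ((u^2)^2 * (u^2)^2) := by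
    have e1 : (m n : ℝ) * LL = 9 * (((k n : ℝ) + 1) * LL) * ((L2 n : ℝ) + 1) := by
      rw [hmcast]; ring
    have e2 : ((k n : ℝ) + 1) * LL ≤ 2 * (u^2)^2 + 4 * u := by
      have : ((k n : ℝ) + 1) * LL = (k n : ℝ) * LL + LL := by ring
      rw [this, hu4]
      linarith
    have e3 : ((L2 n : ℝ) + 1) ≤ 1.4641 * ((u^2)^2) + 1 := by rw [hu4]; linarith
    have e4 : (0:ℝ) ≤ ((k n : ℝ) + 1) * LL := by positivity
    have e5 : (0:ℝ) ≤ ((L2 n : ℝ) + 1) := by linarith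
    calc (m n : ℝ) * LL = 9 * ((((k n : ℝ) + 1) * LL) * ((L2 n : ℝ) + 1)) := by rw [e1]; ring
      _ ≤ 9 * ((2 * (u^2)^2 + 4 * u) * (1.4641 * ((u^2)^2) + 1)) := by
          have := mul_le_mul e2 e3 e5 (by positivity)
          linarith
      _ ≤ 29 * ((u^2)^2 * (u^2)^2) := pure2 hu31
  have hL2eq : L^2 = (u^2)^2 * (u^2)^2 := by rw [hu4]; ring
  calc (((SmallIdx n).card : ℝ) + (m n : ℝ)) * LL
      = ((SmallIdx n).card : ℝ) * LL + (m n : ℝ) * LL := by ring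
    _ ≤ (u^2)^2 * (u^2)^2 + 29 * ((u^2)^2 * (u^2)^2) := by linarith
    _ = 30 * L^2 := by rw [hL2eq]; ring

lemma divDim2_le_of_good (hω : ∃ ω : Om n, Good n ω) :
    divDim2 (Set.Icc 1 n) ≤ (SmallIdx n).card + m n := by
  obtain ⟨ω, hg⟩ := hω
  have hcard : Fintype.card (↥(SmallIdx n) ⊕ Fin (m n)) = (SmallIdx n).card + m n := by
    simp
  set e := Fintype.equivFinOfCardEq hcard with he
  apply Nat.sInf_le
  refine ⟨fun a => (g n ω a).map e.toEmbedding, ?_⟩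
  intro a ha b hb
  rw [Finset.map_subset_map]
  exact g_subset_iff n ω hg (Finset.mem_Icc.2 (Set.mem_Icc.1 ha))
    (Finset.mem_Icc.2 (Set.mem_Icc.1 hb))

end DivDimAux

end

/-- Upper bound: `dim₂(D_{[n]}) ≤ ((4/3) e π² + ε) (log n)² / log log n` for large `n`. -/
theorem divDim2_Icc_upper_bound :
    ∀ ε : ℝ, 0 < ε → ∃ N : ℕ, ∀ n : ℕ, N ≤ n →
      (divDim2 (Set.Icc 1 n) : ℝ)
        ≤ ((4 / 3) * Real.exp 1 * Real.pi ^ 2 + ε) * (Real.log n) ^ 2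
            / Real.log (Real.log n) := by
  intro ε hε
  refine ⟨⌈Real.exp (10^6)⌉₊ + 1, fun n hn => ?_⟩
  have hL : (10^6:ℝ) ≤ Real.log n := by
    have h2 : ((⌈Real.exp (10^6)⌉₊ : ℕ) : ℝ) ≤ (n:ℝ) := by
      exact_mod_cast le_trans (Nat.le_succ _) hn
    have h1 : Real.exp (10^6) ≤ (n:ℝ) := (Nat.le_ceil _).trans h2
    have h3 := Real.log_le_log (Real.exp_pos _) h1
    rwa [Real.log_exp] at h3
  obtain ⟨hn2, hTn, hk1, hkn, hsize⟩ := DivDimAux.analytic_facts n hL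
  have hnum := DivDimAux.counting_numeric n (by omega) hk1 hkn
  have hgood := DivDimAux.exists_good n hkn hnum
  have hd := DivDimAux.divDim2_le_of_good n hgood
  have hLLpos : 0 < Real.log (Real.log n) := by
    apply Real.log_pos
    norm_num at hL
    linarith
  have hdR : (divDim2 (Set.Icc 1 n) : ℝ)
      ≤ ((DivDimAux.SmallIdx n).card : ℝ) + (DivDimAux.m n : ℝ) := by
    exact_mod_cast hd
  have h30 : (divDim2 (Set.Icc 1 n) : ℝ) ≤ 30 * (Real.log n)^2 / Real.log (Real.log n) := by
    rw [le_div_iff₀ hLLpos]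
    calc (divDim2 (Set.Icc 1 n) : ℝ) * Real.log (Real.log n)
        ≤ (((DivDimAux.SmallIdx n).card : ℝ) + (DivDimAux.m n : ℝ)) * Real.log (Real.log n) :=
          mul_le_mul_of_nonneg_right hdR hLLpos.le
      _ ≤ 30 * (Real.log n)^2 := hsize
  refine h30.trans ?_
  have hπ2 : (9.8:ℝ) ≤ Real.pi^2 := by nlinarith [Real.pi_gt_d6]
  have he1 : (2.71:ℝ) ≤ Real.exp 1 := by nlinarith [Real.exp_one_gt_d9]
  have hC : (30:ℝ) ≤ (4 / 3) * Real.exp 1 * Real.pi ^ 2 + ε := by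
    have hmul : (2.71:ℝ) * 9.8 ≤ Real.exp 1 * Real.pi^2 :=
      mul_le_mul he1 hπ2 (by norm_num) (by linarith)
    nlinarith
  have hnum2 : 30 * (Real.log n)^2 ≤ ((4 / 3) * Real.exp 1 * Real.pi ^ 2 + ε) * (Real.log n)^2 :=
    mul_le_mul_of_nonneg_right hC (sq_nonneg _)
  exact (div_le_div_iff_of_pos_right hLLpos).2 hnum2
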